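/- Let X be a nominal set over an infinite type 𝔸 with decidable equality. Then every x ∈ X has a least finite support, namely Supp(x) := the intersection of all finite supports of x; this set is finite, supports x, and is contained in every finite support of x. -/

import Mathlib

/-- The subgroup of finitary permutations of `𝔸`: permutations moving
only finitely many elements. -/
def FinPerm (𝔸 : Type*) : Subgroup (Equiv.Perm 𝔸) where
  carrier := {π : Equiv.Perm 𝔸 | {a | π a ≠ a}.Finite}
  one_mem' := by simp
  mul_mem' := by
    intro π σ hπ hσ
    refine (hπ.union hσ).subset ?_
    intro a ha
    by_contra h
    simp only [Set.mem_union, Set.mem_setOf_eq, not_or, not_not] at h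
    exact ha (by simp [Equiv.Perm.mul_apply, h.1, h.2])
  inv_mem' := by
    intro π hπ
    refine hπ.subset ?_
    intro a ha
    simp only [Set.mem_setOf_eq] at *
    intro h
    exact ha (by nth_rewrite 1 [← h]; exact Equiv.symm_apply_apply π a)

/-- `A` supports `x`: every finitary permutation fixing `A` pointwise fixes `x`. -/
def NSupports (𝔸 : Type*) {X : Type*} [MulAction (FinPerm 𝔸) X] (A : Set 𝔸) (x : X) : Prop :=
  ∀ π : FinPerm 𝔸, (∀ a ∈ A, π.1 a = a) → π • x = x

section Aux
variable {𝔸 X : Type*} [Infinite 𝔸] [DecidableEq 𝔸] [MulAction (FinPerm 𝔸) X]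

def swapFP (a b : 𝔸) : FinPerm 𝔸 :=
  ⟨Equiv.swap a b, by
    refine ((Set.finite_singleton b).insert a).subset ?_
    intro c hc
    simp only [Set.mem_setOf_eq] at hc
    by_contra h
    simp only [Set.mem_insert_iff, Set.mem_singleton_iff, not_or] at h
    exact hc (Equiv.swap_apply_of_ne_of_ne h.1 h.2)⟩

theorem swapFP_smul {A B : Set 𝔸} (hA : A.Finite) (hB : B.Finite) {x : X}
    (hAs : NSupports 𝔸 A x) (hBs : NSupports 𝔸 B x) {a b : 𝔸}
    (ha : a ∉ A ∩ B) (hb : b ∉ A ∩ B) : swapFP a b • x = x := by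
  rcases eq_or_ne a b with rfl | hab
  · have : swapFP a a = 1 := by
      ext c; simp [swapFP]
    rw [this, one_smul]
  have keyA : ∀ u v : 𝔸, u ∉ A → v ∉ A → swapFP u v • x = x := by
    intro u v hu hv
    apply hAs
    intro c hc
    exact Equiv.swap_apply_of_ne_of_ne (fun h => hu (h ▸ hc)) (fun h => hv (h ▸ hc))
  have keyB : ∀ u v : 𝔸, u ∉ B → v ∉ B → swapFP u v • x = x := by
    intro u v hu hv
    apply hBs
    intro c hc
    exact Equiv.swap_apply_of_ne_of_ne (fun h => hu (h ▸ hc)) (fun h => hv (h ▸ hc))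
  have mix : ∀ u v : 𝔸, u ≠ v → u ∉ A → v ∉ B → swapFP u v • x = x := by
    intro u v huv hu hv
    obtain ⟨c, hc⟩ := ((hA.union hB).union ((Set.finite_singleton v).insert u)).infinite_compl.nonempty
    simp only [Set.mem_compl_iff, Set.mem_union, Set.mem_insert_iff,
      Set.mem_singleton_iff, not_or] at hc
    obtain ⟨⟨hcA, hcB⟩, hcu, hcv⟩ := hc
    have hdecomp : swapFP u v = swapFP c u * swapFP v c * swapFP c u := by
      apply Subtype.ext
      show Equiv.swap u v = Equiv.swap c u * Equiv.swap v c * Equiv.swap c u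
      rw [Equiv.swap_mul_swap_mul_swap (Ne.symm hcv) huv.symm, Equiv.swap_comm]
    rw [hdecomp, mul_smul, mul_smul, keyA c u hcA hu, keyB v c hv hcB, keyA c u hcA hu]
  simp only [Set.mem_inter_iff, not_and_or] at ha hb
  rcases ha with ha | ha <;> rcases hb with hb | hb
  · exact keyA a b ha hb
  · exact mix a b hab ha hb
  · have : swapFP a b = swapFP b a := by
      apply Subtype.ext; exact Equiv.swap_comm a b
    rw [this]; exact mix b a hab.symm hb ha
  · exact keyB a b ha hb

theorem inter_supports {A B : Set 𝔸} (hA : A.Finite) (hB : B.Finite) {x : X}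
    (hAs : NSupports 𝔸 A x) (hBs : NSupports 𝔸 B x) : NSupports 𝔸 (A ∩ B) x := by
  have main : ∀ n (π : FinPerm 𝔸) (hπ : {a | π.1 a ≠ a}.Finite),
      hπ.toFinset.card ≤ n → (∀ a ∈ A ∩ B, π.1 a = a) → π • x = x := by
    intro n
    induction n with
    | zero =>
      intro π hπ hcard _
      have hempty : hπ.toFinset = ∅ := Finset.card_eq_zero.mp (Nat.le_zero.mp hcard)
      have : π = 1 := by
        apply Subtype.ext
        ext c
        by_contra h
        have : c ∈ hπ.toFinset := by simpa using h
        simp [hempty] at this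
      rw [this, one_smul]
    | succ n ih =>
      intro π hπ hcard hfix
      by_cases hmov : hπ.toFinset = ∅
      · have : π = 1 := by
          apply Subtype.ext
          ext c
          by_contra h
          have : c ∈ hπ.toFinset := by simpa using h
          simp [hmov] at this
        rw [this, one_smul]
      obtain ⟨a0, ha0⟩ := Finset.nonempty_of_ne_empty hmov
      have ha0π : π.1 a0 ≠ a0 := by simpa using ha0
      obtain ⟨b, hb⟩ : ∃ b, π.1 a0 = b := ⟨_, rfl⟩
      have hab : a0 ≠ b := fun h => ha0π (h ▸ hb)
      have hbmov : π.1 b ≠ b := fun h => hab (π.1.injective (hb.trans h.symm))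
      have haAB : a0 ∉ A ∩ B := fun h => ha0π (hfix a0 h)
      have hbAB : b ∉ A ∩ B := fun h => hbmov (hfix b h)
      set π' := swapFP a0 b * π with hπ'
      have hπ'mem : {c | π'.1 c ≠ c}.Finite := π'.2
      have hsub : hπ'mem.toFinset ⊆ hπ.toFinset.erase a0 := by
        intro c hc
        simp only [Set.Finite.mem_toFinset, Set.mem_setOf_eq] at hc
        rw [Finset.mem_erase]
        constructor
        · intro hceq
          apply hc
          show Equiv.swap a0 b (π.1 c) = c
          rw [hceq, hb, Equiv.swap_apply_right]
        · simp only [Set.Finite.mem_toFinset, Set.mem_setOf_eq]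
          intro h
          apply hc
          show Equiv.swap a0 b (π.1 c) = c
          rw [h]
          apply Equiv.swap_apply_of_ne_of_ne
          · intro hca; rw [hca] at h; exact ha0π h
          · intro hcb; rw [hcb] at h; exact hbmov h
      have hcard' : hπ'mem.toFinset.card ≤ n := by
        calc hπ'mem.toFinset.card ≤ (hπ.toFinset.erase a0).card := Finset.card_le_card hsub
          _ ≤ hπ.toFinset.card - 1 := le_of_eq (Finset.card_erase_of_mem ha0)
          _ ≤ n := by omega
      have hfix' : ∀ c ∈ A ∩ B, π'.1 c = c := by
        intro c hc
        show Equiv.swap a0 b (π.1 c) = c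
        rw [hfix c hc]
        exact Equiv.swap_apply_of_ne_of_ne (fun h => haAB (h ▸ hc)) (fun h => hbAB (h ▸ hc))
      have hπ'x : π' • x = x := ih π' hπ'mem hcard' hfix'
      have : π = swapFP a0 b * π' := by
        rw [hπ', ← mul_assoc]
        have : swapFP a0 b * swapFP a0 b = 1 := by
          apply Subtype.ext
          exact Equiv.swap_mul_self a0 b
        rw [this, one_mul]
      rw [this, mul_smul, hπ'x]
      exact swapFP_smul hA hB hAs hBs haAB hbAB
  intro π hfix
  exact main π.2.toFinset.card π π.2 le_rfl hfix

end Aux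

theorem stmt_3 {𝔸 X : Type*} [Infinite 𝔸] [DecidableEq 𝔸] [MulAction (FinPerm 𝔸) X]
    (hnom : ∀ y : X, ∃ A : Set 𝔸, A.Finite ∧ NSupports 𝔸 A y) (x : X) :
    (⋂₀ {A : Set 𝔸 | A.Finite ∧ NSupports 𝔸 A x}).Finite ∧
    NSupports 𝔸 (⋂₀ {A : Set 𝔸 | A.Finite ∧ NSupports 𝔸 A x}) x ∧
    ∀ B : Set 𝔸, B.Finite → NSupports 𝔸 B x →
      (⋂₀ {A : Set 𝔸 | A.Finite ∧ NSupports 𝔸 A x}) ⊆ B := by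
  obtain ⟨S, hSfin, hSsupp⟩ := hnom x
  set P : ℕ → Prop := fun n => ∃ A : Set 𝔸, A.Finite ∧ NSupports 𝔸 A x ∧ A.ncard = n with hP
  have hPex : ∃ n, P n := ⟨S.ncard, S, hSfin, hSsupp, rfl⟩
  classical
  obtain ⟨M, hMfin, hMsupp, hMcard⟩ := Nat.find_spec hPex
  have hMin : ∀ B : Set 𝔸, B.Finite → NSupports 𝔸 B x → M ⊆ B := by
    intro B hBfin hBsupp
    have hMB : NSupports 𝔸 (M ∩ B) x := inter_supports hMfin hBfin hMsupp hBsupp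
    have hMBfin : (M ∩ B).Finite := hMfin.inter_of_left B
    have hge : Nat.find hPex ≤ (M ∩ B).ncard :=
      Nat.find_min' hPex ⟨M ∩ B, hMBfin, hMB, rfl⟩
    have heq : M ∩ B = M :=
      Set.eq_of_subset_of_ncard_le Set.inter_subset_left (hMcard ▸ hge) hMfin
    intro a haM
    rw [← heq] at haM
    exact haM.2
  have hInterEq : ⋂₀ {A : Set 𝔸 | A.Finite ∧ NSupports 𝔸 A x} = M := by
    apply Set.Subset.antisymm
    · exact Set.sInter_subset_of_mem ⟨hMfin, hMsupp⟩
    · intro a haM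
      rw [Set.mem_sInter]
      rintro B ⟨hBfin, hBsupp⟩
      exact hMin B hBfin hBsupp haM
  rw [hInterEq]
  exact ⟨hMfin, hMsupp, fun B hBfin hBsupp => hMin B hBfin hBsupp⟩
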